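/- (Ramsay's lemma) Let G be a topological groupoid. For any open U ⊆ G and any unital open subset V ⊆ G which is Hausdorff and paracompact in the subspace topology and satisfies G⁰ ∩ V ⊆ U, there is a symmetric unital open W ⊆ U with W·W ⊆ U and G⁰ ∩ W = G⁰ ∩ V. -/

import Mathlib

open Set Topology

attribute [local instance] Classical.propDecidable

/-- A small groupoid, presented on its space of morphisms `G`, with objects
identified with unit morphisms.  `comp g h` is only meaningful when
`src g = tgt h`; its values elsewhere are irrelevant junk. -/
structure Groupoidal (G : Type*) where
  src : G → G
  tgt : G → G
  comp : G → G → G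
  inv : G → G
  src_src : ∀ g, src (src g) = src g
  tgt_of_src : ∀ g, tgt (src g) = src g
  src_of_tgt : ∀ g, src (tgt g) = tgt g
  tgt_tgt : ∀ g, tgt (tgt g) = tgt g
  comp_src : ∀ g, comp g (src g) = g
  tgt_comp_self : ∀ g, comp (tgt g) g = g
  src_comp : ∀ g h, src g = tgt h → src (comp g h) = src h
  tgt_comp : ∀ g h, src g = tgt h → tgt (comp g h) = tgt g
  comp_assoc : ∀ g h k, src g = tgt h → src h = tgt k →
    comp (comp g h) k = comp g (comp h k)
  src_inv : ∀ g, src (inv g) = tgt g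
  tgt_inv : ∀ g, tgt (inv g) = src g
  comp_inv_self : ∀ g, comp g (inv g) = tgt g
  inv_comp_self : ∀ g, comp (inv g) g = src g

namespace Groupoidal

variable {G : Type*} (S : Groupoidal G)

/-- The set of objects (= unit morphisms) of the groupoid. -/
def units : Set G := {x | S.src x = x}

/-- Two morphisms are composable when the source of the first matches the
target of the second. -/
def Composable (g h : G) : Prop := S.src g = S.tgt h

/-- Pointwise product of two subsets of a groupoid. -/
def setMul (A B : Set G) : Set G :=
  {k | ∃ g ∈ A, ∃ h ∈ B, S.Composable g h ∧ k = S.comp g h}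

/-- Pointwise inverse of a subset of a groupoid. -/
def setInv (A : Set G) : Set G := S.inv '' A

def IsSymmetric (A : Set G) : Prop := S.setInv A = A

def IsUnital (A : Set G) : Prop := S.src '' A ⊆ A ∧ S.tgt '' A ⊆ A

/-- A subgroupoid: a subset closed under inverse and multiplication. -/
def IsSubgroupoid (A : Set G) : Prop := S.IsSymmetric A ∧ S.setMul A A ⊆ A

/-- A topological groupoid: all structure maps are continuous (multiplication
on the subspace of composable pairs). -/
structure IsTopological [TopologicalSpace G] : Prop where
  continuous_src : Continuous S.src
  continuous_tgt : Continuous S.tgt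
  continuous_inv : Continuous S.inv
  continuous_comp :
    Continuous fun p : {p : G × G // S.Composable p.1 p.2} => S.comp p.1.1 p.1.2

/-- An open topological groupoid: the source map is open. -/
def IsOpenGroupoid [TopologicalSpace G] : Prop := IsOpenMap S.src

/-- A non-Archimedean topological groupoid: every unit morphism has a
neighborhood basis of open subgroupoids. -/
def IsNonArchimedean [TopologicalSpace G] : Prop :=
  ∀ x ∈ S.units, ∀ W ∈ nhds x, ∃ U : Set G,
    IsOpen U ∧ x ∈ U ∧ U ⊆ W ∧ S.IsSubgroupoid U

/-- A standard Borel groupoid structure: all structure maps are Borel. -/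
structure IsBorelGroupoid [MeasurableSpace G] : Prop where
  measurable_src : Measurable S.src
  measurable_tgt : Measurable S.tgt
  measurable_inv : Measurable S.inv
  measurable_comp :
    Measurable fun p : {p : G × G // S.Composable p.1 p.2} => S.comp p.1.1 p.1.2

end Groupoidal

/-- A `Π⁰₂` subset of a topological space: a countable intersection of sets
of the form (closed ∪ open). -/
def IsPi02 {X : Type*} [TopologicalSpace X] (A : Set X) : Prop :=
  ∃ C O : ℕ → Set X, (∀ n, IsClosed (C n)) ∧ (∀ n, IsOpen (O n)) ∧
    A = ⋂ n, C n ∪ O n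

/-- A quasi-Polish space: homeomorphic to a `Π⁰₂` subspace of `𝕊^ℕ`, where
`𝕊 = Prop` is the Sierpiński space. -/
def IsQuasiPolish (X : Type*) [TopologicalSpace X] : Prop :=
  ∃ A : Set (ℕ → Prop), IsPi02 A ∧ Nonempty (X ≃ₜ ↥A)

/-- A σ-locally Polish space: a countable cover by open Polish subspaces. -/
def IsSigmaLocallyPolish (X : Type*) [TopologicalSpace X] : Prop :=
  ∃ V : ℕ → Set X, (∀ n, IsOpen (V n)) ∧ (∀ n, PolishSpace (V n)) ∧
    (⋃ n, V n) = Set.univ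

/-- A functor between groupoids presented on their spaces of morphisms. -/
structure GFunctor {G H : Type*} (S : Groupoidal G) (T : Groupoidal H) where
  toFun : G → H
  map_src : ∀ g, toFun (S.src g) = T.src (toFun g)
  map_tgt : ∀ g, toFun (S.tgt g) = T.tgt (toFun g)
  map_comp : ∀ g h, S.Composable g h →
    toFun (S.comp g h) = T.comp (toFun g) (toFun h)

namespace GFunctor

variable {G H K : Type*} {S : Groupoidal G} {T : Groupoidal H} {R : Groupoidal K}

/-- The identity functor. -/
def id (S : Groupoidal G) : GFunctor S S :=
  ⟨fun g => g, fun _ => rfl, fun _ => rfl, fun _ _ _ => rfl⟩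

/-- Composition of functors. -/
def comp (F₂ : GFunctor T R) (F₁ : GFunctor S T) : GFunctor S R where
  toFun := F₂.toFun ∘ F₁.toFun
  map_src g := by simp only [Function.comp_apply, F₁.map_src, F₂.map_src]
  map_tgt g := by simp only [Function.comp_apply, F₁.map_tgt, F₂.map_tgt]
  map_comp g h hc := by
    have hc' : T.Composable (F₁.toFun g) (F₁.toFun h) := by
      unfold Groupoidal.Composable at hc ⊢
      rw [← F₁.map_src, ← F₁.map_tgt, hc]
    simp only [Function.comp_apply, F₁.map_comp g h hc, F₂.map_comp _ _ hc']

/-- A functor is full if it is surjective on each hom-set. -/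
def Full (F : GFunctor S T) : Prop :=
  ∀ x ∈ S.units, ∀ y ∈ S.units, ∀ k : H,
    T.src k = F.toFun x → T.tgt k = F.toFun y →
      ∃ g : G, S.src g = x ∧ S.tgt g = y ∧ F.toFun g = k

/-- A functor is faithful if it is injective on each hom-set. -/
def Faithful (F : GFunctor S T) : Prop :=
  ∀ g g' : G, S.src g = S.src g' → S.tgt g = S.tgt g' →
    F.toFun g = F.toFun g' → g = g'

end GFunctor

/-- A natural transformation (automatically an isomorphism, between functors
of groupoids); `app` is only meaningful on unit morphisms. -/
structure GNatIso {G H : Type*} {S : Groupoidal G} {T : Groupoidal H}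
    (F F' : GFunctor S T) where
  app : G → H
  app_src : ∀ x ∈ S.units, T.src (app x) = F.toFun x
  app_tgt : ∀ x ∈ S.units, T.tgt (app x) = F'.toFun x
  naturality : ∀ g : G,
    T.comp (app (S.tgt g)) (F.toFun g) = T.comp (F'.toFun g) (app (S.src g))

/-- A Borel functor which is an equivalence of groupoids witnessed by a Borel
inverse functor and Borel natural isomorphisms. -/
def IsBorelEquivalence {G H : Type*} [MeasurableSpace G] [MeasurableSpace H]
    {S : Groupoidal G} {T : Groupoidal H} (F : GFunctor S T) : Prop :=
  Measurable F.toFun ∧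
  ∃ F' : GFunctor T S, Measurable F'.toFun ∧
    (∃ α : GNatIso (F.comp F') (GFunctor.id T), Measurable α.app) ∧
    (∃ β : GNatIso (F'.comp F) (GFunctor.id S), Measurable β.app)

section RamsayAux

namespace Groupoidal

variable {G : Type*} (S : Groupoidal G)

lemma tgt_unit' {x : G} (hx : S.src x = x) : S.tgt x = x := by
  conv_lhs => rw [← hx]
  rw [S.tgt_of_src, hx]

lemma inv_involutive' (g : G) : S.inv (S.inv g) = g := by
  have h1 : S.src (S.inv (S.inv g)) = S.src g := by rw [S.src_inv, S.tgt_inv]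
  calc S.inv (S.inv g)
      = S.comp (S.inv (S.inv g)) (S.src (S.inv (S.inv g))) := (S.comp_src _).symm
    _ = S.comp (S.inv (S.inv g)) (S.comp (S.inv g) g) := by rw [h1, S.inv_comp_self]
    _ = S.comp (S.comp (S.inv (S.inv g)) (S.inv g)) g :=
        (S.comp_assoc _ _ _ (S.src_inv (S.inv g)) (S.src_inv g)).symm
    _ = S.comp (S.tgt g) g := by rw [S.inv_comp_self, S.src_inv]
    _ = g := S.tgt_comp_self g

lemma inv_unit' {x : G} (hx : S.src x = x) : S.inv x = x := by
  have h := S.comp_inv_self x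
  have ht : S.tgt (S.inv x) = x := by rw [S.tgt_inv, hx]
  have h2 := S.tgt_comp_self (S.inv x)
  rw [ht] at h2
  rw [← h2, h, S.tgt_unit' hx]

end Groupoidal

end RamsayAux

/-- **Ramsay's lemma.**  In a topological groupoid, for any open `U` and any
unital open `V` which is Hausdorff and paracompact in the subspace topology
with `G⁰ ∩ V ⊆ U`, there is a symmetric unital open `W ⊆ U` with `W · W ⊆ U`
and `G⁰ ∩ W = G⁰ ∩ V`. -/
theorem ramsay_halving {G : Type*} [TopologicalSpace G]
    (S : Groupoidal G) (hTop : S.IsTopological)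
    (U V : Set G) (hUopen : IsOpen U) (hVopen : IsOpen V)
    (hVunital : S.IsUnital V)
    (hT2 : T2Space ↥V) (hPara : ParacompactSpace ↥V)
    (hVU : S.units ∩ V ⊆ U) :
    ∃ W : Set G, IsOpen W ∧ W ⊆ U ∧ S.IsSymmetric W ∧ S.IsUnital W ∧
      S.setMul W W ⊆ U ∧ S.units ∩ W = S.units ∩ V := by
  classical
  -- Step 1: for each unit x in V, an open P x ∋ x with P x ⊆ U and (P x)·(P x) ⊆ U.
  have hstep : ∀ x : G, ∃ P : Set G, IsOpen P ∧ (x ∈ S.units ∩ V → x ∈ P) ∧ P ⊆ U ∧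
      ∀ g ∈ P, ∀ h ∈ P, S.Composable g h → S.comp g h ∈ U := by
    intro x
    by_cases hx : x ∈ S.units ∩ V
    · obtain ⟨hxu, hxV⟩ := hx
      have hsx : S.src x = x := hxu
      have htx : S.tgt x = x := S.tgt_unit' hsx
      have hcomp : S.Composable x x := by
        show S.src x = S.tgt x
        rw [hsx, htx]
      have hxx : S.comp x x = x := by
        have h := S.comp_src x
        rwa [hsx] at h
      have hxU : x ∈ U := hVU ⟨hxu, hxV⟩
      have hUopen' : IsOpen ((fun p : {p : G × G // S.Composable p.1 p.2} =>
          S.comp p.1.1 p.1.2) ⁻¹' U) := hUopen.preimage hTop.continuous_comp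
      rw [isOpen_induced_iff] at hUopen'
      obtain ⟨T, hTo, hTeq⟩ := hUopen'
      have hxT : (x, x) ∈ T := by
        have hmem : (⟨(x, x), hcomp⟩ : {p : G × G // S.Composable p.1 p.2}) ∈
            (fun p : {p : G × G // S.Composable p.1 p.2} => S.comp p.1.1 p.1.2) ⁻¹' U := by
          simp only [Set.mem_preimage]
          rw [hxx]; exact hxU
        rw [← hTeq] at hmem
        exact hmem
      obtain ⟨P₁, P₂, h1o, h2o, hx1, hx2, hsub⟩ := isOpen_prod_iff.mp hTo x x hxT
      refine ⟨P₁ ∩ P₂ ∩ U, (h1o.inter h2o).inter hUopen,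
        fun _ => ⟨⟨hx1, hx2⟩, hxU⟩, Set.inter_subset_right, ?_⟩
      intro g hg h hh hc
      have hgh : (g, h) ∈ T := hsub ⟨hg.1.1, hh.1.2⟩
      have hmem : (⟨(g, h), hc⟩ : {p : G × G // S.Composable p.1 p.2}) ∈
          Subtype.val ⁻¹' T := hgh
      rw [hTeq] at hmem
      exact hmem
    · exact ⟨∅, isOpen_empty, fun h => absurd h hx, Set.empty_subset _, by simp⟩
  choose P hPo hPX hPU hPm using hstep
  -- Step 2: an open cover of the paracompact Hausdorff space V.
  have hsrcV : ∀ y : ↥V, S.src ↑y ∈ V := fun y => hVunital.1 ⟨↑y, y.2, rfl⟩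
  set u : Option G → Set ↥V :=
    fun i => Option.rec {y : ↥V | (y : G) ∉ S.units} (fun x => Subtype.val ⁻¹' P x) i with hu
  have hclosedunits : IsClosed {y : ↥V | (y : G) ∈ S.units} := by
    have heq : {y : ↥V | (y : G) ∈ S.units} =
        {y : ↥V | (⟨S.src ↑y, hsrcV y⟩ : ↥V) = y} := by
      ext y
      simp only [Set.mem_setOf_eq, Groupoidal.units, Subtype.ext_iff]
    rw [heq]
    exact isClosed_eq (Continuous.subtype_mk
      (hTop.continuous_src.comp continuous_subtype_val) _) continuous_id
  have huo : ∀ i, IsOpen (u i) := by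
    rintro (_ | x)
    · exact hclosedunits.isOpen_compl
    · exact (hPo x).preimage continuous_subtype_val
  have huc : ⋃ i, u i = Set.univ := by
    ext y
    simp only [Set.mem_iUnion, Set.mem_univ, iff_true]
    by_cases hy : (y : G) ∈ S.units
    · exact ⟨some ↑y, hPX _ ⟨hy, y.2⟩⟩
    · exact ⟨none, hy⟩
  obtain ⟨v, hvo, hvc, hvLF, hvu⟩ := precise_refinement u huo huc
  obtain ⟨v', hv'c, hv'o, hv'cl⟩ :=
    exists_iUnion_eq_closure_subset hvo (fun y => hvLF.point_finite y) hvc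
  -- Step 3: transfer to G.
  set C : Option G → Set G := fun i => Subtype.val '' closure (v' i) with hC
  set Q : Option G → Set G :=
    fun i => Option.rec ∅ (fun x => P x ∩ S.inv ⁻¹' P x) i with hQ
  have hQo : ∀ i, IsOpen (Q i) := by
    rintro (_ | x)
    · exact isOpen_empty
    · exact (hPo x).inter ((hPo x).preimage hTop.continuous_inv)
  have hQU : ∀ i, Q i ⊆ U := by
    rintro (_ | x)
    · exact Set.empty_subset _
    · exact Set.inter_subset_left.trans (hPU x)
  have hQsymm : ∀ i, ∀ g ∈ Q i, S.inv g ∈ Q i := by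
    rintro (_ | x) g hg
    · exact absurd hg (Set.notMem_empty g)
    · exact ⟨hg.2, by rw [Set.mem_preimage, S.inv_involutive']; exact hg.1⟩
  have hCV : ∀ i, C i ⊆ V := by
    rintro i z ⟨p, _, rfl⟩
    exact p.2
  have hCu : ∀ i, C i ⊆ Subtype.val '' (u i) := by
    intro i
    exact Set.image_mono ((hv'cl i).trans (hvu i))
  have hCP : ∀ x : G, ∀ z ∈ C (some x), z ∈ P x := by
    intro x z hz
    obtain ⟨p, hp, rfl⟩ := hCu (some x) hz
    exact hp
  have hCnone : ∀ z ∈ C none, z ∉ S.units := by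
    intro z hz
    obtain ⟨p, hp, rfl⟩ := hCu none hz
    exact hp
  have hcover : ∀ y ∈ V, ∃ i, y ∈ C i := by
    intro y hy
    have : (⟨y, hy⟩ : ↥V) ∈ ⋃ i, v' i := by rw [hv'c]; trivial
    obtain ⟨i, hi⟩ := Set.mem_iUnion.mp this
    exact ⟨i, ⟨⟨y, hy⟩, subset_closure hi, rfl⟩⟩
  have hVCo : ∀ i, IsOpen (V \ C i) := by
    intro i
    have heq : V \ C i = Subtype.val '' (closure (v' i))ᶜ := by
      ext z
      constructor
      · rintro ⟨hzV, hzC⟩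
        exact ⟨⟨z, hzV⟩, fun h => hzC ⟨_, h, rfl⟩, rfl⟩
      · rintro ⟨p, hp, rfl⟩
        refine ⟨p.2, ?_⟩
        rintro ⟨q, hq, hqe⟩
        exact hp (Subtype.val_injective hqe ▸ hq)
    rw [heq]
    exact hVopen.isOpenMap_subtype_val _ isClosed_closure.isOpen_compl
  have hLF : ∀ y, y ∈ V → ∃ O : Set G, IsOpen O ∧ y ∈ O ∧ O ⊆ V ∧
      {i | (C i ∩ O).Nonempty}.Finite := by
    intro y hy
    obtain ⟨t, ht, hfin⟩ := hvLF ⟨y, hy⟩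
    obtain ⟨t', ht't, ht'o, hyt'⟩ := mem_nhds_iff.mp ht
    refine ⟨Subtype.val '' t', hVopen.isOpenMap_subtype_val _ ht'o, ⟨⟨y, hy⟩, hyt', rfl⟩,
      ?_, ?_⟩
    · rintro z ⟨p, _, rfl⟩; exact p.2
    · apply hfin.subset
      rintro i ⟨z, hzC, hzO⟩
      obtain ⟨p, hp, hpz⟩ := hzC
      obtain ⟨q, hq, hqz⟩ := hzO
      have hpq : p = q := Subtype.val_injective (hpz.trans hqz.symm)
      exact ⟨p, hv'cl i hp, ht't (hpq ▸ hq)⟩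
  -- Step 4: the set W.
  set W : Set G := {g | S.src g ∈ V ∧ S.tgt g ∈ V ∧ (∀ i, S.src g ∈ C i → g ∈ Q i) ∧
      (∀ i, S.tgt g ∈ C i → g ∈ Q i)} with hW
  have hXW : ∀ x, x ∈ S.units ∩ V → x ∈ W := by
    rintro x ⟨hxu, hxV⟩
    have hsx : S.src x = x := hxu
    have htx : S.tgt x = x := S.tgt_unit' hsx
    have hQmem : ∀ i, x ∈ C i → x ∈ Q i := by
      rintro (_ | z) hxC
      · exact absurd hxu (hCnone x hxC)
      · have hxP := hCP z x hxC
        exact ⟨hxP, by rw [Set.mem_preimage, S.inv_unit' hsx]; exact hxP⟩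
    exact ⟨by rw [hsx]; exact hxV, by rw [htx]; exact hxV,
      fun i h => hQmem i (by rwa [hsx] at h), fun i h => hQmem i (by rwa [htx] at h)⟩
  have hWU : W ⊆ U := by
    intro g hg
    obtain ⟨i, hi⟩ := hcover (S.src g) hg.1
    exact hQU i (hg.2.2.1 i hi)
  have hWopen : IsOpen W := by
    rw [isOpen_iff_forall_mem_open]
    intro g₀ hg₀
    obtain ⟨h1, h2, h3, h4⟩ := hg₀
    obtain ⟨O₁, hO₁o, hO₁m, hO₁V, hO₁f⟩ := hLF _ h1
    obtain ⟨O₂, hO₂o, hO₂m, hO₂V, hO₂f⟩ := hLF _ h2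
    set E : Set (Option G) := {i | S.src g₀ ∈ C i ∨ S.tgt g₀ ∈ C i} with hE
    have hEfin : E.Finite := by
      apply (hO₁f.union hO₂f).subset
      rintro i (h | h)
      · exact Set.mem_union_left _ ⟨_, h, hO₁m⟩
      · exact Set.mem_union_right _ ⟨_, h, hO₂m⟩
    set D₁ : Set (Option G) := {i | (C i ∩ O₁).Nonempty ∧ S.src g₀ ∉ C i} with hD₁
    set D₂ : Set (Option G) := {i | (C i ∩ O₂).Nonempty ∧ S.tgt g₀ ∉ C i} with hD₂
    have hD₁fin : D₁.Finite := hO₁f.subset fun i hi => hi.1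
    have hD₂fin : D₂.Finite := hO₂f.subset fun i hi => hi.1
    refine ⟨S.src ⁻¹' (O₁ ∩ ⋂ i ∈ D₁, (V \ C i)) ∩
        S.tgt ⁻¹' (O₂ ∩ ⋂ i ∈ D₂, (V \ C i)) ∩ ⋂ i ∈ E, Q i, ?_, ?_, ?_⟩
    · rintro g ⟨⟨hgs, hgt⟩, hgQ⟩
      obtain ⟨hgsO, hgsD⟩ := hgs
      obtain ⟨hgtO, hgtD⟩ := hgt
      refine ⟨hO₁V hgsO, hO₂V hgtO, ?_, ?_⟩
      · intro i hCi
        by_cases hEi : S.src g₀ ∈ C i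
        · exact Set.mem_iInter₂.mp hgQ i (Or.inl hEi)
        · have hmem := Set.mem_iInter₂.mp hgsD i ⟨⟨S.src g, hCi, hgsO⟩, hEi⟩
          exact absurd hCi hmem.2
      · intro i hCi
        by_cases hEi : S.tgt g₀ ∈ C i
        · exact Set.mem_iInter₂.mp hgQ i (Or.inr hEi)
        · have hmem := Set.mem_iInter₂.mp hgtD i ⟨⟨S.tgt g, hCi, hgtO⟩, hEi⟩
          exact absurd hCi hmem.2
    · exact (((hO₁o.inter (hD₁fin.isOpen_biInter fun i _ => hVCo i)).preimage
          hTop.continuous_src).inter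
        ((hO₂o.inter (hD₂fin.isOpen_biInter fun i _ => hVCo i)).preimage
          hTop.continuous_tgt)).inter
        (hEfin.isOpen_biInter fun i _ => hQo i)
    · refine ⟨⟨⟨hO₁m, ?_⟩, ⟨hO₂m, ?_⟩⟩, ?_⟩
      · exact Set.mem_iInter₂.mpr fun i hi => ⟨h1, hi.2⟩
      · exact Set.mem_iInter₂.mpr fun i hi => ⟨h2, hi.2⟩
      · refine Set.mem_iInter₂.mpr fun i hi => ?_
        rcases hi with hi | hi
        · exact h3 i hi
        · exact h4 i hi
  have hWinv : ∀ g ∈ W, S.inv g ∈ W := by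
    rintro g ⟨h1, h2, h3, h4⟩
    refine ⟨by rw [S.src_inv]; exact h2, by rw [S.tgt_inv]; exact h1, ?_, ?_⟩
    · intro i hi
      rw [S.src_inv] at hi
      exact hQsymm i g (h4 i hi)
    · intro i hi
      rw [S.tgt_inv] at hi
      exact hQsymm i g (h3 i hi)
  refine ⟨W, hWopen, hWU, ?_, ?_, ?_, ?_⟩
  · -- symmetric
    ext k
    constructor
    · rintro ⟨g, hg, rfl⟩
      exact hWinv g hg
    · intro hk
      exact ⟨S.inv k, hWinv k hk, S.inv_involutive' k⟩
  · -- unital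
    constructor
    · rintro _ ⟨g, hg, rfl⟩
      exact hXW _ ⟨S.src_src g, hg.1⟩
    · rintro _ ⟨g, hg, rfl⟩
      exact hXW _ ⟨S.src_of_tgt g, hg.2.1⟩
  · -- multiplication
    rintro k ⟨g, hg, h, hh, hc, rfl⟩
    have hc' : S.src g = S.tgt h := hc
    obtain ⟨i, hi⟩ := hcover (S.src g) hg.1
    have hgQ := hg.2.2.1 i hi
    have hhQ := hh.2.2.2 i (hc' ▸ hi)
    match i with
    | none => exact absurd hgQ (Set.notMem_empty g)
    | some x => exact hPm x g hgQ.1 h hhQ.1 hc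
  · -- units
    ext x
    constructor
    · rintro ⟨hxu, hxW⟩
      have hsx : S.src x = x := hxu
      exact ⟨hxu, hsx ▸ hxW.1⟩
    · rintro ⟨hxu, hxV⟩
      exact ⟨hxu, hXW x ⟨hxu, hxV⟩⟩
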